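/- Let L ≥ 1 be an integer and let x be a real number with 0 < |x| ≤ 1/(4L). Then (1/L) · | sin(π·L·x) / sin(π·x) | ≥ 2·sqrt(2)/π, and in particular this normalized correlation magnitude exceeds 0.9. -/

import Mathlib

open Real

/-- Chord bound: on `[0, π/4]`, `sin θ ≥ (2√2/π) θ` by concavity. -/
lemma sin_chord_bound (θ : ℝ) (h0 : 0 ≤ θ) (h1 : θ ≤ Real.pi / 4) :
    2 * Real.sqrt 2 / Real.pi * θ ≤ Real.sin θ := by
  have hpi := Real.pi_pos
  set s : ℝ := θ / (Real.pi / 4) with hs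
  have hs0 : 0 ≤ s := by positivity
  have hs1 : s ≤ 1 := by
    rw [hs, div_le_one (by positivity)]; exact h1
  have hmem0 : (0 : ℝ) ∈ Set.Icc 0 Real.pi := by constructor <;> [rfl; positivity]
  have hmem1 : Real.pi / 4 ∈ Set.Icc 0 Real.pi := by
    constructor <;> [positivity; linarith]
  have hcc := strictConcaveOn_sin_Icc.concaveOn.2 hmem0 hmem1
      (show (0:ℝ) ≤ 1 - s by linarith) hs0 (by ring)
  have hθ : (1 - s) • (0 : ℝ) + s • (Real.pi / 4) = θ := by
    simp only [smul_eq_mul, mul_zero, zero_add]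
    rw [hs, div_mul_cancel₀ _ (by positivity)]
  rw [hθ] at hcc
  have h44 : Real.sin (Real.pi / 4) = Real.sqrt 2 / 2 := Real.sin_pi_div_four
  have heq : (1 - s) • Real.sin 0 + s • Real.sin (Real.pi / 4) = s * (Real.sqrt 2 / 2) := by
    simp [h44]
  rw [heq] at hcc
  have heq2 : s * (Real.sqrt 2 / 2) = 2 * Real.sqrt 2 / Real.pi * θ := by
    rw [hs]; field_simp; ring
  linarith [heq2 ▸ hcc]

/-- Residual-CFO robustness of payload correlation: for a payload symbol of
`L ≥ 1` samples and a residual normalized CFO `x` with `0 < |x| ≤ 1/(4L)`, the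
normalized correlation magnitude satisfies
`(1/L) |sin(πLx)/sin(πx)| ≥ 2√2/π`, which in particular exceeds `0.9`. -/
theorem residual_cfo_correlation_bound (L : ℕ) (hL : 1 ≤ L) (x : ℝ)
    (hx0 : 0 < |x|) (hx : |x| ≤ 1 / (4 * L)) :
    (1 / (L : ℝ)) * |Real.sin (Real.pi * L * x) / Real.sin (Real.pi * x)| ≥
        2 * Real.sqrt 2 / Real.pi ∧
    (1 / (L : ℝ)) * |Real.sin (Real.pi * L * x) / Real.sin (Real.pi * x)| > 0.9 := by
  have hpi := Real.pi_pos
  have hL0 : (0 : ℝ) < L := by exact_mod_cast hL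
  have hL1 : (1 : ℝ) ≤ L := by exact_mod_cast hL
  set y := |x| with hy
  have hy0 : 0 < y := hx0
  set a := Real.pi * y with ha
  set b := Real.pi * L * y with hb
  have hbLa : b = L * a := by rw [hb, ha]; ring
  have hb4 : b ≤ Real.pi / 4 := by
    rw [hb]
    have : Real.pi * L * y ≤ Real.pi * L * (1 / (4 * L)) := by
      apply mul_le_mul_of_nonneg_left hx (by positivity)
    calc Real.pi * L * y ≤ Real.pi * L * (1 / (4 * L)) := this
      _ = Real.pi / 4 := by field_simp
  have ha0 : 0 < a := by positivity
  have hab : a ≤ b := by rw [hbLa]; nlinarith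
  have ha4 : a ≤ Real.pi / 4 := le_trans hab hb4
  have hsa_pos : 0 < Real.sin a :=
    Real.sin_pos_of_pos_of_lt_pi ha0 (by linarith)
  have hsa_le : Real.sin a ≤ a := Real.sin_le ha0.le
  have hchord : 2 * Real.sqrt 2 / Real.pi * b ≤ Real.sin b :=
    sin_chord_bound b (by positivity) hb4
  have hsb_pos : 0 < Real.sin b :=
    Real.sin_pos_of_pos_of_lt_pi (by positivity) (by linarith)
  -- relate the abs expression to sin b / sin a
  have hxy : x = y ∨ x = -y := by
    rcases abs_choice x with h | h
    · left; rw [hy, h]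
    · right; rw [hy]; linarith
  have habs : |Real.sin (Real.pi * L * x) / Real.sin (Real.pi * x)| =
      Real.sin b / Real.sin a := by
    rcases hxy with h | h
    · rw [h, ← hb, ← ha]
      exact abs_of_pos (div_pos hsb_pos hsa_pos)
    · rw [h, show Real.pi * L * (-y) = -b by rw [hb]; ring,
        show Real.pi * (-y) = -a by rw [ha]; ring,
        Real.sin_neg, Real.sin_neg, neg_div_neg_eq]
      exact abs_of_pos (div_pos hsb_pos hsa_pos)
  rw [habs]
  have hsqrt2 : (1.414213 : ℝ) < Real.sqrt 2 := by
    rw [show (1.414213 : ℝ) = Real.sqrt (1.414213 ^ 2) by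
      rw [Real.sqrt_sq (by norm_num)]]
    exact Real.sqrt_lt_sqrt (by positivity) (by norm_num)
  -- main estimate
  have key : 2 * Real.sqrt 2 / Real.pi * L ≤ Real.sin b / Real.sin a := by
    rw [le_div_iff₀ hsa_pos]
    have h1 : 2 * Real.sqrt 2 / Real.pi * L * Real.sin a ≤
        2 * Real.sqrt 2 / Real.pi * L * a := by
      apply mul_le_mul_of_nonneg_left hsa_le (by positivity)
    have h2 : 2 * Real.sqrt 2 / Real.pi * L * a = 2 * Real.sqrt 2 / Real.pi * b := by
      rw [hbLa]; ring
    linarith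
  have main : (1 / (L : ℝ)) * (Real.sin b / Real.sin a) ≥ 2 * Real.sqrt 2 / Real.pi := by
    have := mul_le_mul_of_nonneg_left key (by positivity : (0:ℝ) ≤ 1 / L)
    calc 2 * Real.sqrt 2 / Real.pi = 1 / (L:ℝ) * (2 * Real.sqrt 2 / Real.pi * L) := by
          field_simp
      _ ≤ 1 / (L:ℝ) * (Real.sin b / Real.sin a) := this
  refine ⟨main, lt_of_lt_of_le ?_ main⟩
  rw [show (0.9 : ℝ) < 2 * Real.sqrt 2 / Real.pi ↔ 0.9 * Real.pi < 2 * Real.sqrt 2 from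
    lt_div_iff₀ hpi]
  have := Real.pi_lt_d6
  nlinarith
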